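/- Let [4] be the fourth quantum integer for q with q+q⁻¹ = √((5+√21)/2), Z(Q³) = -(2/3)√(8+3√21), Z(TQ²) = (2√3+√7)/3, and Z(Q⁴) = (2/3)√(253/3 + 16√21). Then [4] + Z(TQ²)²/[4] + Z(Q³)²/[4] = Z(Q⁴). -/

import Mathlib

/-- Bessel equality for the relation R3(Q):
    [4] + Z(TQ²)²/[4] + Z(Q³)²/[4] = Z(Q⁴), where [4] = q³+q+q⁻¹+q⁻³. -/
theorem stmt_11 (q : ℝ) (hq : 1 < q)
    (hδ : q + q⁻¹ = Real.sqrt ((5 + Real.sqrt 21)/2)) :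
    (q^3 + q + q⁻¹ + q⁻¹^3)
      + ((2*Real.sqrt 3 + Real.sqrt 7)/3)^2 / (q^3 + q + q⁻¹ + q⁻¹^3)
      + (-(2/3) * Real.sqrt (8 + 3*Real.sqrt 21))^2 / (q^3 + q + q⁻¹ + q⁻¹^3)
    = (2/3) * Real.sqrt (253/3 + 16*Real.sqrt 21) := by
  have hq0 : 0 < q := lt_trans one_pos hq
  have hqne : q ≠ 0 := ne_of_gt hq0
  have hqq : q * q⁻¹ = 1 := mul_inv_cancel₀ hqne
  have hs21 : Real.sqrt 21 ^ 2 = 21 := Real.sq_sqrt (by norm_num)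
  have hs21nn : (0:ℝ) ≤ Real.sqrt 21 := Real.sqrt_nonneg 21
  have hd2 : (q + q⁻¹)^2 = (5 + Real.sqrt 21)/2 := by
    rw [hδ]; exact Real.sq_sqrt (by positivity)
  set X : ℝ := q^3 + q + q⁻¹ + q⁻¹^3 with hXdef
  have hXd : X = (q + q⁻¹)^3 - 2*(q + q⁻¹) := by
    rw [hXdef]; linear_combination (-3*(q+q⁻¹)) * hqq
  have hX2 : X^2 = 19 + 4*Real.sqrt 21 := by
    rw [hXd]
    linear_combination ((q+q⁻¹)^4 + ((5+Real.sqrt 21)/2 - 4)*(q+q⁻¹)^2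
      + ((5+Real.sqrt 21)/2)^2 - 2*(5+Real.sqrt 21) + 4) * hd2
      + ((Real.sqrt 21 + 7)/8) * hs21
  have hdpos : 0 < q + q⁻¹ := by positivity
  have hXpos : 0 < X := by
    rw [hXd]
    have h2 : 2 < (q + q⁻¹)^2 := by nlinarith [hs21nn, hd2]
    nlinarith [hdpos]
  have hXne : X ≠ 0 := ne_of_gt hXpos
  have h3 : Real.sqrt 3 ^ 2 = 3 := Real.sq_sqrt (by norm_num)
  have h7 : Real.sqrt 7 ^ 2 = 7 := Real.sq_sqrt (by norm_num)
  have h37 : Real.sqrt 3 * Real.sqrt 7 = Real.sqrt 21 := by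
    rw [← Real.sqrt_mul (by norm_num)]; norm_num
  have hterm1 : ((2*Real.sqrt 3 + Real.sqrt 7)/3)^2 = (19 + 4*Real.sqrt 21)/9 := by
    linear_combination (4/9) * h3 + (1/9) * h7 + (4/9) * h37
  have h83 : Real.sqrt (8 + 3*Real.sqrt 21) ^ 2 = 8 + 3*Real.sqrt 21 :=
    Real.sq_sqrt (by positivity)
  have hterm2 : (-(2/3) * Real.sqrt (8 + 3*Real.sqrt 21))^2 = (32 + 12*Real.sqrt 21)/9 := by
    linear_combination (4/9) * h83
  have hC : Real.sqrt (253/3 + 16*Real.sqrt 21) = (37 + (26/3)*Real.sqrt 21)/X := by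
    rw [show (253/3 + 16*Real.sqrt 21 : ℝ) = ((37 + (26/3)*Real.sqrt 21)/X)^2 from ?_]
    · exact Real.sqrt_sq (by positivity)
    · rw [div_pow]
      rw [eq_div_iff (by positivity)]
      linear_combination ((253/3 + 16*Real.sqrt 21)) * hX2 - (100/9) * hs21
  have hXX : X * X⁻¹ = 1 := mul_inv_cancel₀ hXne
  rw [hterm1, hterm2, hC]
  linear_combination hX2 / X - X * hXX
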